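/- Let A ∈ ℝ^{m×n}, C ∈ ℝ^{p×n} with rank(C) = p and rank([A; C]) = n (the (m+p)×n stacked matrix has full column rank). Then the (p+m+n)×(p+m+n) augmented matrix 𝒜 = [[0, 0, C], [0, I_m, A], [Cᵀ, Aᵀ, 0]] is nonsingular. -/

import Mathlib

open Matrix

lemma aux_full_col_rank {k : Type*} [Fintype k] {l : ℕ} (M : Matrix k (Fin l) ℝ) (h : M.rank = l)
    (x : Fin l → ℝ) (hx : M *ᵥ x = 0) : x = 0 := by
  have h1 := LinearMap.finrank_range_add_finrank_ker M.mulVecLin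
  have h2 : Module.finrank ℝ (Fin l → ℝ) = l := Module.finrank_fin_fun ℝ
  rw [h2] at h1
  have hrank : Module.finrank ℝ (LinearMap.range M.mulVecLin) = l := h
  have hker : Module.finrank ℝ (LinearMap.ker M.mulVecLin) = 0 := by omega
  have : LinearMap.ker M.mulVecLin = ⊥ := Submodule.finrank_eq_zero.mp hker
  have hxmem : x ∈ LinearMap.ker M.mulVecLin := by
    simpa [Matrix.mulVecLin_apply] using hx
  rw [this] at hxmem
  simpa using hxmem

/-- If `rank C = p` and the stacked matrix `[A; C]` has full column rank `n`, then the
augmented matrix `𝒜 = [[0,0,C],[0,I_m,A],[Cᵀ,Aᵀ,0]]` is nonsingular. -/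
theorem stmt9 (m n p : ℕ) (A : Matrix (Fin m) (Fin n) ℝ) (C : Matrix (Fin p) (Fin n) ℝ)
    (hC : C.rank = p) (hAC : (Matrix.fromRows A C).rank = n) :
    IsUnit (Matrix.fromBlocks
      (0 : Matrix (Fin p) (Fin p) ℝ)
      (Matrix.fromCols (0 : Matrix (Fin p) (Fin m) ℝ) C)
      (Matrix.fromRows (0 : Matrix (Fin m) (Fin p) ℝ) Cᵀ)
      (Matrix.fromBlocks (1 : Matrix (Fin m) (Fin m) ℝ) A Aᵀ
        (0 : Matrix (Fin n) (Fin n) ℝ))) := by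
  set M := Matrix.fromBlocks
      (0 : Matrix (Fin p) (Fin p) ℝ)
      (Matrix.fromCols (0 : Matrix (Fin p) (Fin m) ℝ) C)
      (Matrix.fromRows (0 : Matrix (Fin m) (Fin p) ℝ) Cᵀ)
      (Matrix.fromBlocks (1 : Matrix (Fin m) (Fin m) ℝ) A Aᵀ
        (0 : Matrix (Fin n) (Fin n) ℝ)) with hM
  rw [← Matrix.mulVec_injective_iff_isUnit]
  rw [show M.mulVec = M.mulVecLin from rfl]
  rw [← LinearMap.ker_eq_bot, LinearMap.ker_eq_bot']
  intro x hx
  set y : Fin p → ℝ := fun i => x (Sum.inl i) with hy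
  set v : Fin m → ℝ := fun i => x (Sum.inr (Sum.inl i)) with hv
  set z : Fin n → ℝ := fun i => x (Sum.inr (Sum.inr i)) with hz
  have hxeq := funext_iff.mp (show M *ᵥ x = 0 from hx)
  -- row equations
  have eq1 : C *ᵥ z = 0 := by
    funext i
    have := hxeq (Sum.inl i)
    simp only [hM, mulVec, dotProduct, Fintype.sum_sum_type, fromBlocks_apply₁₁,
      fromBlocks_apply₁₂, fromCols_apply_inl, fromCols_apply_inr,
      Matrix.zero_apply, zero_mul, Finset.sum_const_zero, zero_add, Pi.zero_apply] at this ⊢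
    simpa [hz] using this
  have eq2 : v + A *ᵥ z = 0 := by
    funext i
    have := hxeq (Sum.inr (Sum.inl i))
    simp only [hM, mulVec, dotProduct, Fintype.sum_sum_type, fromBlocks_apply₂₁,
      fromBlocks_apply₂₂, fromRows_apply_inl, fromRows_apply_inr, fromBlocks_apply₁₁,
      fromBlocks_apply₁₂, one_apply, Matrix.zero_apply, zero_mul, Finset.sum_const_zero,
      zero_add, Pi.zero_apply, Pi.add_apply] at this ⊢
    rw [← this]
    simp [hv, hz, Finset.sum_ite_eq, mul_comm]
  have eq3 : Cᵀ *ᵥ y + Aᵀ *ᵥ v = 0 := by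
    funext i
    have := hxeq (Sum.inr (Sum.inr i))
    simp only [hM, mulVec, dotProduct, Fintype.sum_sum_type, fromBlocks_apply₂₁,
      fromBlocks_apply₂₂, fromRows_apply_inl, fromRows_apply_inr, fromBlocks_apply₂₁,
      Matrix.zero_apply, zero_mul, Finset.sum_const_zero, add_zero, Pi.zero_apply,
      Pi.add_apply] at this ⊢
    simpa [hy, hv] using this
  -- z ⬝ (Cᵀ y + Aᵀ v) = 0 gives (A z) ⬝ v = 0
  have key : (A *ᵥ z) ⬝ᵥ v = 0 := by
    have h0 : z ⬝ᵥ (Cᵀ *ᵥ y + Aᵀ *ᵥ v) = 0 := by rw [eq3]; simp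
    rw [dotProduct_add] at h0
    rw [dotProduct_mulVec, vecMul_transpose, dotProduct_mulVec, vecMul_transpose] at h0
    rw [eq1] at h0
    simpa using h0
  have hvA : v = -(A *ᵥ z) := by
    have := eq2
    funext i
    have := congrFun eq2 i
    simp only [Pi.add_apply, Pi.zero_apply, Pi.neg_apply] at this ⊢
    linarith
  have hv0 : v = 0 := by
    have : v ⬝ᵥ v = 0 := by
      rw [hvA, neg_dotProduct, ← hvA, key, neg_zero]
    exact dotProduct_self_eq_zero.mp this
  have hAz : A *ᵥ z = 0 := by
    have := eq2
    rw [hv0, zero_add] at this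
    exact this
  have hz0 : z = 0 := by
    apply aux_full_col_rank (Matrix.fromRows A C) hAC
    rw [fromRows_mulVec, hAz, eq1]
    funext i; cases i <;> simp
  have hy0 : y = 0 := by
    apply aux_full_col_rank Cᵀ (by rw [Matrix.rank_transpose]; exact hC)
    rw [hz0] at hAz
    have := eq3
    rw [hv0, mulVec_zero, add_zero] at this
    exact this
  funext i
  rcases i with i | i
  · exact congrFun hy0 i
  rcases i with i | i
  · exact congrFun hv0 i
  · exact congrFun hz0 i
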